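/- Let C = ((F1(x)|0),(l(x)|F2(x))) be a double cyclic code of length (r,s) over Z4 with dual C⊥ = ((F̂1(x)|0),(l̂(x)|F̂2(x))). Then l̂*(x)·F1(x) = ν(x)·(x^r−1) for some ν(x) ∈ Z4[x], i.e., l̂*(x)·F1(x) = 0 in Z4[x]/(x^r−1). -/

import Mathlib

open Polynomial

abbrev Z4 := ZMod 4

abbrev Rq (n : ℕ) := Polynomial Z4 ⧸ Ideal.span ({(X : Polynomial Z4) ^ n - 1} : Set (Polynomial Z4))

noncomputable def mkQ (n : ℕ) (p : Polynomial Z4) : Rq n := Ideal.Quotient.mk _ p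

noncomputable def toPoly {n : ℕ} (c : Fin n → Z4) : Polynomial Z4 :=
  ∑ i, Polynomial.C (c i) * X ^ (i : ℕ)

noncomputable def tau {r s : ℕ} (c : (Fin r → Z4) × (Fin s → Z4)) : Rq r × Rq s :=
  (mkQ r (toPoly c.1), mkQ s (toPoly c.2))

def shiftT {r s : ℕ} (c : (Fin r → Z4) × (Fin s → Z4)) : (Fin r → Z4) × (Fin s → Z4) :=
  (fun i => c.1 ((finRotate r).symm i), fun j => c.2 ((finRotate s).symm j))

def innerProd {r s : ℕ} (c c' : (Fin r → Z4) × (Fin s → Z4)) : Z4 :=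
  ∑ i, c.1 i * c'.1 i + ∑ j, c.2 j * c'.2 j

/-- The `Z4[x]`-submodule of `Z4[x]/(x^r−1) × Z4[x]/(x^s−1)` generated by
`(F1|0)` and `(l|F2)`. -/
noncomputable def polyGen2 (r s : ℕ) (F1 l F2 : Polynomial Z4) :
    Submodule (Polynomial Z4) (Rq r × Rq s) :=
  Submodule.span (Polynomial Z4) {(mkQ r F1, (0 : Rq s)), (mkQ r l, mkQ s F2)}

/-- The dual of a set of words with respect to the standard inner product. -/
def dualSet {r s : ℕ} (C : Set ((Fin r → Z4) × (Fin s → Z4))) :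
    Set ((Fin r → Z4) × (Fin s → Z4)) :=
  {c' | ∀ c ∈ C, innerProd c c' = 0}

/- ===== auxiliary lemmas ===== -/

instance : Nontrivial Z4 := ⟨0, 1, by decide⟩

lemma monic_d (n : ℕ) (hn : 0 < n) : (X ^ n - 1 : Polynomial Z4).Monic := by
  simpa using monic_X_pow_sub_C (1 : Z4) hn.ne'

noncomputable def repv (n : ℕ) (p : Polynomial Z4) : Fin n → Z4 :=
  fun i => (p %ₘ (X ^ n - 1)).coeff i

lemma toPoly_repv (n : ℕ) (hn : 0 < n) (p : Polynomial Z4) :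
    toPoly (repv n p) = p %ₘ (X ^ n - 1) := by
  have hdeg : (p %ₘ (X ^ n - 1)).natDegree < n := by
    have h1 := degree_modByMonic_lt p (monic_d n hn)
    have h2 : (X ^ n - 1 : Polynomial Z4).degree = n := by
      simpa using degree_X_pow_sub_C hn (1 : Z4)
    rw [h2] at h1
    by_cases h0 : p %ₘ (X ^ n - 1) = 0
    · simpa [h0] using hn
    · exact (natDegree_lt_iff_degree_lt h0).mpr h1
  conv_rhs => rw [(p %ₘ (X ^ n - 1)).as_sum_range' n hdeg]
  have h := Fin.sum_univ_eq_sum_range (fun k => C ((p %ₘ (X ^ n - 1)).coeff k) * X ^ k) n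
  rw [show toPoly (repv n p)
        = ∑ i : Fin n, (fun k => C ((p %ₘ (X ^ n - 1)).coeff k) * X ^ k) (i : ℕ) from rfl, h]
  simp [C_mul_X_pow_eq_monomial]

lemma mkQ_repv (n : ℕ) (hn : 0 < n) (p : Polynomial Z4) :
    mkQ n (toPoly (repv n p)) = mkQ n p := by
  rw [toPoly_repv n hn]
  conv_rhs => rw [← modByMonic_add_div p (X ^ n - 1)]
  have h : mkQ n (X ^ n - 1) = 0 :=
    Ideal.Quotient.eq_zero_iff_mem.mpr (Ideal.subset_span (Set.mem_singleton _))
  simp only [mkQ, map_add, map_mul] at *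
  rw [h, zero_mul, add_zero]

lemma mkQ_pow_X_r (n : ℕ) : (mkQ n X) ^ n = 1 := by
  have h : mkQ n (X ^ n - 1) = 0 :=
    Ideal.Quotient.eq_zero_iff_mem.mpr (Ideal.subset_span (Set.mem_singleton _))
  have := sub_eq_zero.mp (by simpa [mkQ, map_sub, map_pow] using h)
  simpa [mkQ, map_pow] using this

lemma mkQ_pow_mod (n m : ℕ) : (mkQ n X) ^ m = (mkQ n X) ^ (m % n) := by
  conv_lhs => rw [← Nat.div_add_mod m n, pow_add, pow_mul, mkQ_pow_X_r, one_pow, one_mul]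

lemma pow_val_add (n : ℕ) [NeZero n] (i j : Fin n) :
    (mkQ n X) ^ (((i + j : Fin n)) : ℕ) = (mkQ n X) ^ (i : ℕ) * (mkQ n X) ^ (j : ℕ) := by
  rw [Fin.val_add, ← mkQ_pow_mod, pow_add]

lemma x_mul_u (n : ℕ) [NeZero n] (j : Fin n) :
    (mkQ n X) ^ (j : ℕ) * ((mkQ n X) ^ (n - 1)) ^ (j : ℕ) = 1 := by
  have hn : 0 < n := Nat.pos_of_ne_zero (NeZero.ne n)
  rw [← mul_pow, ← pow_succ', Nat.sub_add_cancel hn, mkQ_pow_X_r, one_pow]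

lemma u_pow_mul (n : ℕ) [NeZero n] (i j : Fin n) :
    ((mkQ n X) ^ (n - 1)) ^ (j : ℕ) * (mkQ n X) ^ (i : ℕ)
      = (mkQ n X) ^ (((i - j : Fin n)) : ℕ) := by
  have hA : (mkQ n X) ^ (((i - j : Fin n)) : ℕ) * (mkQ n X) ^ (j : ℕ)
      = (mkQ n X) ^ (i : ℕ) := by
    rw [← pow_add, mkQ_pow_mod, ← Fin.val_add, sub_add_cancel]
  have hxu := x_mul_u n j
  have cancel : ∀ A B : Rq n, A * (mkQ n X) ^ (j : ℕ) = B * (mkQ n X) ^ (j : ℕ) → A = B := by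
    intro A B hAB
    have h1 : A * ((mkQ n X) ^ (j:ℕ) * ((mkQ n X) ^ (n-1)) ^ (j:ℕ))
        = B * ((mkQ n X) ^ (j:ℕ) * ((mkQ n X) ^ (n-1)) ^ (j:ℕ)) := by
      rw [← mul_assoc, ← mul_assoc, hAB]
    rwa [hxu, mul_one, mul_one] at h1
  apply cancel
  rw [hA, show (((mkQ n X)^(n-1))^(j:ℕ) * (mkQ n X)^(i:ℕ)) * (mkQ n X)^(j:ℕ)
      = (mkQ n X)^(i:ℕ) * ((mkQ n X)^(j:ℕ) * ((mkQ n X)^(n-1))^(j:ℕ)) from by ring,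
    hxu, mul_one]

lemma mkQ_toPoly (n : ℕ) (c : Fin n → Z4) :
    mkQ n (toPoly c) = ∑ i, (Ideal.Quotient.mk _) (C (c i)) * (mkQ n X) ^ (i : ℕ) := by
  simp [mkQ, toPoly, map_sum, map_mul, map_pow]

lemma mkQ_toPoly_shift (n : ℕ) [NeZero n] (a : Fin n → Z4) (t : Fin n) :
    mkQ n (toPoly (fun i => a (i - t))) = (mkQ n X) ^ (t : ℕ) * mkQ n (toPoly a) := by
  rw [mkQ_toPoly, mkQ_toPoly, Finset.mul_sum]
  rw [← Equiv.sum_comp (Equiv.addRight t)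
    (fun i => (Ideal.Quotient.mk _) (C (a (i - t))) * (mkQ n X) ^ (i : ℕ))]
  apply Finset.sum_congr rfl
  intro j _
  simp only [Equiv.coe_addRight, add_sub_cancel_right]
  rw [pow_val_add]
  ring

lemma key_mul (r : ℕ) [NeZero r] (a b : Fin r → Z4)
    (h : ∀ t : Fin r, ∑ j, a (t + j) * b j = 0) :
    eval₂ ((Ideal.Quotient.mk (Ideal.span ({(X : Polynomial Z4) ^ r - 1} :
          Set (Polynomial Z4)))).comp C)
        ((mkQ r X) ^ (r - 1)) (toPoly b) * mkQ r (toPoly a) = 0 := by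
  rw [toPoly, eval₂_finset_sum, mkQ_toPoly]
  simp only [eval₂_mul, eval₂_C, eval₂_X_pow, RingHom.comp_apply]
  rw [Finset.sum_mul_sum]
  have step : ∀ j : Fin r,
      (∑ i : Fin r, (Ideal.Quotient.mk _ (C (b j)) * ((mkQ r X) ^ (r-1)) ^ (j:ℕ))
          * (Ideal.Quotient.mk _ (C (a i)) * (mkQ r X) ^ (i:ℕ)))
      = ∑ t : Fin r, Ideal.Quotient.mk _ (C (a (t + j) * b j)) * (mkQ r X) ^ (t:ℕ) := by
    intro j
    rw [← Equiv.sum_comp (Equiv.addRight j)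
      (fun i => (Ideal.Quotient.mk _ (C (b j)) * ((mkQ r X) ^ (r-1)) ^ (j:ℕ))
          * (Ideal.Quotient.mk _ (C (a i)) * (mkQ r X) ^ (i:ℕ)))]
    apply Finset.sum_congr rfl
    intro t _
    simp only [Equiv.coe_addRight]
    rw [pow_val_add, map_mul, map_mul,
      show (Ideal.Quotient.mk _ (C (b j)) * ((mkQ r X) ^ (r-1)) ^ (j:ℕ))
          * (Ideal.Quotient.mk _ (C (a (t + j))) * ((mkQ r X) ^ (t:ℕ) * (mkQ r X) ^ (j:ℕ)))
        = (Ideal.Quotient.mk _ (C (a (t + j))) * Ideal.Quotient.mk _ (C (b j))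
            * (mkQ r X) ^ (t:ℕ)) * ((mkQ r X) ^ (j:ℕ) * ((mkQ r X) ^ (r-1)) ^ (j:ℕ))
        from by ring,
      x_mul_u, mul_one]
  rw [Finset.sum_congr rfl (fun j _ => step j), Finset.sum_comm]
  have inner : ∀ t : Fin r,
      (∑ j : Fin r, Ideal.Quotient.mk (Ideal.span ({(X : Polynomial Z4) ^ r - 1} :
          Set (Polynomial Z4))) (C (a (t + j) * b j)) * (mkQ r X) ^ (t:ℕ)) = 0 := by
    intro t
    rw [← Finset.sum_mul, ← map_sum, ← map_sum, h t, map_zero, map_zero, zero_mul]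
  simp only [inner, Finset.sum_const_zero]

lemma mkQ_eval₂ (n : ℕ) (p : Polynomial Z4) :
    mkQ n p = eval₂ ((Ideal.Quotient.mk _).comp C) (mkQ n X) p := by
  induction p using Polynomial.induction_on' with
  | add p q hp hq => simp only [mkQ, map_add] at *; rw [hp, hq, eval₂_add]
  | monomial k a =>
      rw [eval₂_monomial, ← C_mul_X_pow_eq_monomial]
      simp [mkQ, map_mul, map_pow]

/-- with `C = ((F1|0),(l|F2))` and dual `C⊥ = ((F̂1|0),(l̂|F̂2))`,
one has `l̂*·F1 = ν·(x^r−1)` for some `ν ∈ Z4[x]`, i.e. `l̂*·F1 = 0` in `Z4[x]/(x^r−1)`. -/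

theorem stmt_14 (r s : ℕ) (hr : Odd r) (hs : Odd s)
    (F1 l F2 Fh1 lh Fh2 : Polynomial Z4)
    (C : Set ((Fin r → Z4) × (Fin s → Z4)))
    (hC : ∀ c, c ∈ C ↔ tau c ∈ polyGen2 r s F1 l F2)
    (hdual : ∀ c, c ∈ dualSet C ↔ tau c ∈ polyGen2 r s Fh1 lh Fh2) :
    (∃ ν : Polynomial Z4, lh.reverse * F1 = ν * (X ^ r - 1)) ∧
      mkQ r (lh.reverse * F1) = 0 := by
  have hr0 : 0 < r := by rcases hr with ⟨k, hk⟩; omega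
  have hs0 : 0 < s := by rcases hs with ⟨k, hk⟩; omega
  haveI : NeZero r := ⟨hr0.ne'⟩
  set a := repv r F1 with ha
  set b := repv r lh with hb
  set b2 := repv s Fh2 with hb2
  -- the dual generator word
  have hch : ((b, b2) : (Fin r → Z4) × (Fin s → Z4)) ∈ dualSet C := by
    rw [hdual]
    have htau : tau ((b, b2) : (Fin r → Z4) × (Fin s → Z4)) = (mkQ r lh, mkQ s Fh2) := by
      simp only [tau]
      rw [show toPoly (b, b2).1 = toPoly b from rfl, show toPoly (b, b2).2 = toPoly b2 from rfl,
        hb, hb2, mkQ_repv r hr0, mkQ_repv s hs0]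
    rw [htau]
    exact Submodule.subset_span (Set.mem_insert_of_mem _ rfl)
  -- the shifted generator words lie in C, giving inner product relations
  have hsum : ∀ t : Fin r, (∑ i, a (i - t) * b i) = 0 := by
    intro t
    have hmem : (((fun i => a (i - t)), (fun _ => 0)) : (Fin r → Z4) × (Fin s → Z4)) ∈ C := by
      rw [hC]
      have h2 : toPoly (fun _ : Fin s => (0 : Z4)) = 0 := by simp [toPoly]
      have htau : tau (((fun i => a (i - t)), (fun _ => 0)) : (Fin r → Z4) × (Fin s → Z4))
          = (X : Polynomial Z4) ^ (t : ℕ) • ((mkQ r F1, (0 : Rq s)) : Rq r × Rq s) := by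
        simp only [tau, h2]
        refine Prod.ext ?_ ?_
        · show mkQ r (toPoly (fun i => a (i - t))) = (X : Polynomial Z4) ^ (t : ℕ) • mkQ r F1
          rw [mkQ_toPoly_shift r a t, ha, mkQ_repv r hr0]
          rfl
        · show mkQ s 0 = (X : Polynomial Z4) ^ (t : ℕ) • (0 : Rq s)
          rw [smul_zero]
          simp [mkQ]
      rw [htau]
      exact Submodule.smul_mem _ _ (Submodule.subset_span (Set.mem_insert _ _))
    have h0 := hch _ hmem
    simpa [innerProd] using h0
  have hkey : ∀ t : Fin r, (∑ j, a (t + j) * b j) = 0 := by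
    intro t
    have h0 := hsum (-t)
    simp only [sub_neg_eq_add] at h0
    rw [← h0]
    exact Finset.sum_congr rfl (fun j _ => by rw [add_comm])
  have hmulzero := key_mul r a b hkey
  -- invertibility of u = x^(r-1)
  letI : Invertible ((mkQ r X) ^ (r - 1)) :=
    ⟨mkQ r X, by rw [← pow_succ', Nat.sub_add_cancel hr0, mkQ_pow_X_r],
      by rw [← pow_succ, Nat.sub_add_cancel hr0, mkQ_pow_X_r]⟩
  have hinv : (⅟((mkQ r X) ^ (r - 1)) : Rq r) = mkQ r X := rfl
  have hrev := eval₂_reverse_mul_pow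
    ((Ideal.Quotient.mk (Ideal.span ({(X : Polynomial Z4) ^ r - 1} :
        Set (Polynomial Z4)))).comp Polynomial.C) ((mkQ r X) ^ (r - 1)) lh
  rw [hinv, ← mkQ_eval₂] at hrev
  -- eval₂ at u kills X^r - 1
  have hσd : eval₂ ((Ideal.Quotient.mk (Ideal.span ({(X : Polynomial Z4) ^ r - 1} :
        Set (Polynomial Z4)))).comp Polynomial.C) ((mkQ r X) ^ (r - 1)) ((X : Polynomial Z4) ^ r - 1)
      = 0 := by
    rw [eval₂_sub, eval₂_X_pow, eval₂_one, ← pow_mul, mul_comm, pow_mul, mkQ_pow_X_r,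
      one_pow, sub_self]
  have hσ : eval₂ ((Ideal.Quotient.mk (Ideal.span ({(X : Polynomial Z4) ^ r - 1} :
        Set (Polynomial Z4)))).comp Polynomial.C) ((mkQ r X) ^ (r - 1)) lh
      = eval₂ ((Ideal.Quotient.mk (Ideal.span ({(X : Polynomial Z4) ^ r - 1} :
        Set (Polynomial Z4)))).comp Polynomial.C) ((mkQ r X) ^ (r - 1)) (toPoly b) := by
    conv_lhs => rw [← modByMonic_add_div lh (X ^ r - 1)]
    rw [eval₂_add, eval₂_mul, hσd, zero_mul, add_zero, hb, toPoly_repv r hr0]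
  -- conclude the quotient is zero
  have hzero : mkQ r (lh.reverse * F1) = 0 := by
    have hstep : mkQ r lh.reverse * mkQ r F1 * ((mkQ r X) ^ (r - 1)) ^ lh.natDegree = 0 := by
      have : mkQ r lh.reverse * ((mkQ r X) ^ (r - 1)) ^ lh.natDegree * mkQ r F1 = 0 := by
        rw [hrev, hσ, ← mkQ_repv r hr0 F1, ← ha]
        exact hmulzero
      rw [← this]; ring
    have hu : IsUnit (((mkQ r X) ^ (r - 1)) ^ lh.natDegree) :=
      (isUnit_of_invertible ((mkQ r X) ^ (r - 1))).pow _
    have := hu.mul_left_eq_zero.mp hstep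
    rw [show mkQ r (lh.reverse * F1) = mkQ r lh.reverse * mkQ r F1 from map_mul _ _ _]
    exact this
  refine ⟨?_, hzero⟩
  have hmem := Ideal.Quotient.eq_zero_iff_mem.mp hzero
  obtain ⟨ν, hν⟩ := Ideal.mem_span_singleton.mp hmem
  exact ⟨ν, by rw [hν]; ring⟩
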